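/- arXiv:1810.05446 — 3 statements merged into one kernel-verified Lean document; each statement's English description precedes it below -/
import Mathlib

section
/- For any finite DAG G, the cardinality of its equivalence class under the relation 'equal transitive closure' equals 2^(l − r), where l is the number of edges of the transitive closure of G and r is the number of edges of the transitive reduction of G. Equivalently, the equivalence class consists exactly of the graphs (V, E_red ∪ D) for D ranging over subsets of E_cl \ E_red. -/
private lemma rtg_mono' {α : Type*} {r s : α → α → Prop}
    (h : ∀ x y, r x y → Relation.ReflTransGen s x y) {x y : α}
    (hxy : Relation.ReflTransGen r x y) : Relation.ReflTransGen s x y := by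
  induction hxy with
  | refl => exact .refl
  | tail _ h2 ih => exact ih.trans (h _ _ h2)

private lemma tg_mono' {α : Type*} {r s : α → α → Prop}
    (h : ∀ x y, r x y → Relation.TransGen s x y) {x y : α}
    (hxy : Relation.TransGen r x y) : Relation.TransGen s x y := by
  induction hxy with
  | single h1 => exact h _ _ h1
  | tail _ h2 ih => exact ih.trans (h _ _ h2)

private lemma erase_path {V : Type*} [DecidableEq V] {Ered : Finset (V × V)} {a b x y : V}
    (h : Relation.ReflTransGen (fun u v => (u, v) ∈ Ered) x y) :
    Relation.ReflTransGen (fun u v => (u, v) ∈ Ered.erase (a, b)) x y ∨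
    (Relation.ReflTransGen (fun u v => (u, v) ∈ Ered.erase (a, b)) x a ∧
     Relation.ReflTransGen (fun u v => (u, v) ∈ Ered.erase (a, b)) b y) := by
  induction h using Relation.ReflTransGen.head_induction_on with
  | refl => exact Or.inl .refl
  | head hxz _ ih =>
    rename_i x' z _
    by_cases hc : (x', z) = (a, b)
    · obtain ⟨rfl, rfl⟩ : x' = a ∧ z = b := Prod.mk.injEq .. ▸ hc
      rcases ih with h1 | ⟨_, h3⟩
      · exact Or.inr ⟨.refl, h1⟩
      · exact Or.inr ⟨.refl, h3⟩
    · rcases ih with h1 | ⟨h2, h3⟩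
      · exact Or.inl (.head (Finset.mem_erase.2 ⟨hc, hxz⟩) h1)
      · exact Or.inr ⟨.head (Finset.mem_erase.2 ⟨hc, hxz⟩) h2, h3⟩

/-- for a finite DAG `G = (V, E)` with transitive closure having
`l` edges and transitive reduction `Ered` having `r` edges, the equivalence
class of `G` under "equal transitive closure" has cardinality `2 ^ (l - r)`;
equivalently, the class consists exactly of the graphs `Ered ∪ D` for `D`
ranging over subsets of the edges of the transitive closure. -/
theorem dag_class_card {V : Type*} [Fintype V] [DecidableEq V]
    (E Ered : Finset (V × V)) (l r : ℕ)
    (hdag : ∀ v, ¬ Relation.TransGen (fun a b => (a, b) ∈ E) v v)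
    (hsub : Ered ⊆ E)
    (hreach : Relation.ReflTransGen (fun a b => (a, b) ∈ Ered) =
      Relation.ReflTransGen (fun a b => (a, b) ∈ E))
    (hmin : ∀ D ⊆ Ered, Relation.ReflTransGen (fun a b => (a, b) ∈ D) =
      Relation.ReflTransGen (fun a b => (a, b) ∈ E) → D = Ered)
    (hl : l = Set.ncard {p : V × V | Relation.TransGen (fun a b => (a, b) ∈ E) p.1 p.2})
    (hr : r = Ered.card) :
    Nat.card {H : Finset (V × V) //
        (∀ v, ¬ Relation.TransGen (fun a b => (a, b) ∈ H) v v) ∧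
        Relation.TransGen (fun a b => (a, b) ∈ H) =
          Relation.TransGen (fun a b => (a, b) ∈ E)} = 2 ^ (l - r) ∧
    ∀ H : Finset (V × V),
      ((∀ v, ¬ Relation.TransGen (fun a b => (a, b) ∈ H) v v) ∧
        Relation.TransGen (fun a b => (a, b) ∈ H) =
          Relation.TransGen (fun a b => (a, b) ∈ E)) ↔
      ∃ D : Finset (V × V),
        (∀ p ∈ D, Relation.TransGen (fun a b => (a, b) ∈ E) p.1 p.2) ∧ H = Ered ∪ D := by
  classical
  set rE := fun a b : V => (a, b) ∈ E with hrE
  set rRed := fun a b : V => (a, b) ∈ Ered with hrRed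
  -- transitive closure of Ered equals that of E
  have hTred : Relation.TransGen rRed = Relation.TransGen rE := by
    funext a b
    apply propext
    constructor
    · intro h; exact tg_mono' (fun u v h => .single (hsub h)) h
    · intro h
      have h1 : Relation.ReflTransGen rRed a b := hreach ▸ h.to_reflTransGen
      rcases Relation.reflTransGen_iff_eq_or_transGen.1 h1 with rfl | h2
      · exact absurd h (hdag _)
      · exact h2
  -- the closure finset
  set Ecl : Finset (V × V) :=
    Finset.univ.filter (fun p => Relation.TransGen rE p.1 p.2) with hEcl
  have hmemcl : ∀ p : V × V, p ∈ Ecl ↔ Relation.TransGen rE p.1 p.2 := by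
    intro p; simp [hEcl]
  have hredcl : Ered ⊆ Ecl := by
    intro p hp
    exact (hmemcl p).2 (Relation.TransGen.single (hsub hp))
  -- key: any equivalent acyclic H contains Ered
  have hkey : ∀ H : Finset (V × V),
      ((∀ v, ¬ Relation.TransGen (fun a b => (a, b) ∈ H) v v) ∧
        Relation.TransGen (fun a b => (a, b) ∈ H) = Relation.TransGen rE) ↔
      (Ered ⊆ H ∧ H ⊆ Ecl) := by
    intro H
    constructor
    · rintro ⟨hHa, hHeq⟩
      constructor
      · -- Ered ⊆ H
        intro p hp
        obtain ⟨a, b⟩ := p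
        by_contra hab
        have hEab : Relation.TransGen rE a b := Relation.TransGen.single (hsub hp)
        have hHab : Relation.TransGen (fun a b => (a, b) ∈ H) a b := hHeq ▸ hEab
        -- decompose into a path of length ≥ 2
        obtain ⟨c, hac, hcb⟩ : ∃ c, Relation.TransGen rE a c ∧ Relation.TransGen rE c b := by
          obtain ⟨c, hac0, hcb0⟩ := Relation.TransGen.tail'_iff.mp hHab
          rcases Relation.reflTransGen_iff_eq_or_transGen.1 hac0 with rfl | hac1
          · exact absurd hcb0 hab
          · exact ⟨c, hHeq ▸ hac1, hHeq ▸ Relation.TransGen.single hcb0⟩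
        set D := Ered.erase (a, b) with hD
        have hDsub : D ⊆ Ered := Finset.erase_subset _ _
        -- D-reachability to E-reachability
        have hDtoE : ∀ x y : V, Relation.ReflTransGen (fun u v => (u, v) ∈ D) x y →
            Relation.ReflTransGen rE x y := by
          intro x y h
          have := rtg_mono' (fun u v hm => .single (hDsub hm)) h
          exact hreach ▸ this
        -- the two half-paths avoid the edge (a,b)
        have hac' : Relation.ReflTransGen (fun u v => (u, v) ∈ D) a c := by
          have : Relation.ReflTransGen rRed a c := hreach ▸ hac.to_reflTransGen
          rcases erase_path this with h1 | ⟨_, h3⟩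
          · exact h1
          · exfalso
            have hbc : Relation.ReflTransGen rE b c := hDtoE _ _ h3
            rcases Relation.reflTransGen_iff_eq_or_transGen.1 hbc with rfl | h4
            · exact hdag _ hcb
            · exact hdag b (h4.trans hcb)
          -- done
        have hcb' : Relation.ReflTransGen (fun u v => (u, v) ∈ D) c b := by
          have : Relation.ReflTransGen rRed c b := hreach ▸ hcb.to_reflTransGen
          rcases erase_path this with h1 | ⟨h2, _⟩
          · exact h1
          · exfalso
            have hca : Relation.ReflTransGen rE c a := hDtoE _ _ h2
            rcases Relation.reflTransGen_iff_eq_or_transGen.1 hca with rfl | h4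
            · exact hdag _ hac
            · exact hdag a (hac.trans h4)
        have hDE : Relation.ReflTransGen (fun u v => (u, v) ∈ D) =
            Relation.ReflTransGen rE := by
          funext x y
          apply propext
          constructor
          · exact fun h => hDtoE x y h
          · intro h
            have h' : Relation.ReflTransGen rRed x y := hreach ▸ h
            refine rtg_mono' (fun u v huv => ?_) h'
            by_cases hc : (u, v) = (a, b)
            · obtain ⟨rfl, rfl⟩ : u = a ∧ v = b := Prod.mk.injEq .. ▸ hc
              exact hac'.trans hcb'
            · exact Relation.ReflTransGen.single (Finset.mem_erase.2 ⟨hc, huv⟩)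
        have := hmin D hDsub hDE
        have : (a, b) ∈ D := this ▸ hp
        exact (Finset.notMem_erase _ _) this
      · -- H ⊆ Ecl
        intro p hp
        exact (hmemcl p).2 (hHeq ▸ Relation.TransGen.single hp)
    · rintro ⟨h1, h2⟩
      have heq : Relation.TransGen (fun a b => (a, b) ∈ H) = Relation.TransGen rE := by
        funext x y
        apply propext
        constructor
        · intro h
          exact tg_mono' (fun u v huv => (hmemcl (u, v)).1 (h2 huv)) h
        · intro h
          have h' : Relation.TransGen rRed x y := hTred ▸ h
          exact tg_mono' (fun u v huv => .single (h1 huv)) h'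
      refine ⟨fun v hv => hdag v (heq ▸ hv), heq⟩
  -- cardinality of the set {p | TransGen rE p.1 p.2}
  have hlcard : l = Ecl.card := by
    rw [hl, ← Set.ncard_coe_finset]
    congr 1
    ext p
    simp [hEcl]
  constructor
  · -- cardinality
    have : Nat.card {H : Finset (V × V) //
        (∀ v, ¬ Relation.TransGen (fun a b => (a, b) ∈ H) v v) ∧
        Relation.TransGen (fun a b => (a, b) ∈ H) = Relation.TransGen rE}
        = Nat.card {H : Finset (V × V) // H ∈ Finset.Icc Ered Ecl} := by
      apply Nat.card_congr
      apply Equiv.subtypeEquivRight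
      intro H
      rw [hkey H, Finset.mem_Icc]
    rw [this, Nat.card_eq_finsetCard,
      Finset.card_Icc_finset hredcl, hlcard, hr]
  · -- characterization
    intro H
    rw [hkey H]
    constructor
    · rintro ⟨h1, h2⟩
      exact ⟨H, fun p hp => (hmemcl p).1 (h2 hp), (Finset.union_eq_right.2 h1).symm⟩
    · rintro ⟨D, hD, rfl⟩
      refine ⟨Finset.subset_union_left, Finset.union_subset hredcl ?_⟩
      intro p hp
      exact (hmemcl p).2 (hD p hp)
end

section
/- Every finite DAG has a unique transitive reduction: there is a unique minimal set of edges D ⊆ E such that the reachability relation of (V,D) equals the reachability relation of (V,E). -/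
open Relation

/-- every finite DAG `(V, E)` has a unique transitive reduction:
there is a unique minimal edge set `D ⊆ E` such that the reachability relation
(existence of a directed path) of `(V, D)` equals that of `(V, E)`, minimality
meaning that no proper subset of `D` preserves the reachability relation. -/
theorem dag_unique_transitive_reduction {V : Type*} [Fintype V] [DecidableEq V]
    (E : Finset (V × V))
    (hdag : ∀ v, ¬ Relation.TransGen (fun a b => (a, b) ∈ E) v v) :
    ∃! D : Finset (V × V), D ⊆ E ∧
      Relation.ReflTransGen (fun a b => (a, b) ∈ D) =
        Relation.ReflTransGen (fun a b => (a, b) ∈ E) ∧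
      ∀ D' ⊂ D, Relation.ReflTransGen (fun a b => (a, b) ∈ D') ≠
        Relation.ReflTransGen (fun a b => (a, b) ∈ E) := by
  classical
  set rE : V → V → Prop := fun a b => (a, b) ∈ E with hrE
  set D₀ : Finset (V × V) :=
    E.filter (fun p => ¬ ∃ c, TransGen rE p.1 c ∧ TransGen rE c p.2) with hD₀def
  have memD₀ : ∀ a b : V, (a, b) ∈ D₀ ↔
      (a, b) ∈ E ∧ ¬ ∃ c, TransGen rE a c ∧ TransGen rE c b := by
    intro a b; simp [hD₀def]
  set rD : V → V → Prop := fun a b => (a, b) ∈ D₀ with hrD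
  have hsub : D₀ ⊆ E := Finset.filter_subset _ _
  set itv : V → V → Finset V := fun a b =>
    Finset.univ.filter (fun c => ReflTransGen rE a c ∧ ReflTransGen rE c b) with hitv
  have mem_itv : ∀ a b c : V, c ∈ itv a b ↔ ReflTransGen rE a c ∧ ReflTransGen rE c b := by
    intro a b c; simp [hitv]
  -- key: every E-reachability is D₀-reachability
  have key : ∀ n a b, (itv a b).card = n → TransGen rE a b → ReflTransGen rD a b := by
    intro n
    induction n using Nat.strong_induction_on with
    | _ n ih =>
      intro a b hcard hab
      have hb_mem : b ∈ itv a b := (mem_itv _ _ _).2 ⟨hab.to_reflTransGen, ReflTransGen.refl⟩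
      have ha_mem : a ∈ itv a b := (mem_itv _ _ _).2 ⟨ReflTransGen.refl, hab.to_reflTransGen⟩
      obtain ⟨x, hax, hxb⟩ := TransGen.head'_iff.1 hab
      rcases reflTransGen_iff_eq_or_transGen.1 hxb with rfl | hxb'
      · -- single edge (a, b) ∈ E
        by_cases hc : ∃ c, TransGen rE a c ∧ TransGen rE c b
        · obtain ⟨c, hac, hcb⟩ := hc
          have h1 : itv a c ⊂ itv a b := by
            constructor
            · intro y hy
              rw [mem_itv] at hy ⊢
              exact ⟨hy.1, hy.2.trans hcb.to_reflTransGen⟩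
            · intro hss
              have := (mem_itv a c b).1 (hss hb_mem)
              exact hdag c (hcb.trans_left this.2)
          have h2 : itv c b ⊂ itv a b := by
            constructor
            · intro y hy
              rw [mem_itv] at hy ⊢
              exact ⟨hac.to_reflTransGen.trans hy.1, hy.2⟩
            · intro hss
              have := (mem_itv c b a).1 (hss ha_mem)
              exact hdag c (hac.trans_right this.1)
          have c1 : (itv a c).card < n := hcard ▸ Finset.card_lt_card h1
          have c2 : (itv c b).card < n := hcard ▸ Finset.card_lt_card h2
          exact (ih _ c1 a c rfl hac).trans (ih _ c2 c b rfl hcb)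
        · exact ReflTransGen.single ((memD₀ a b).2 ⟨hax, hc⟩)
      · -- a → x, TransGen x b
        have h1 : itv a x ⊂ itv a b := by
          constructor
          · intro y hy
            rw [mem_itv] at hy ⊢
            exact ⟨hy.1, hy.2.trans hxb'.to_reflTransGen⟩
          · intro hss
            have := (mem_itv a x b).1 (hss hb_mem)
            exact hdag x (hxb'.trans_left this.2)
        have h2 : itv x b ⊂ itv a b := by
          constructor
          · intro y hy
            rw [mem_itv] at hy ⊢
            exact ⟨(ReflTransGen.single hax).trans hy.1, hy.2⟩
          · intro hss
            have := (mem_itv x b a).1 (hss ha_mem)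
            exact hdag x ((TransGen.single hax).trans_right this.1)
        have c1 : (itv a x).card < n := hcard ▸ Finset.card_lt_card h1
        have c2 : (itv x b).card < n := hcard ▸ Finset.card_lt_card h2
        exact (ih _ c1 a x rfl (TransGen.single hax)).trans (ih _ c2 x b rfl hxb')
  have hclos : ReflTransGen rD = ReflTransGen rE := by
    funext a b
    apply propext
    constructor
    · exact fun h => ReflTransGen.mono (fun u v huv => hsub huv) _ _ h
    · intro h
      rcases reflTransGen_iff_eq_or_transGen.1 h with rfl | h'
      · exact ReflTransGen.refl
      · exact key _ a b rfl h'
  -- no proper subset works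
  have hmin : ∀ D' ⊂ D₀, ReflTransGen (fun a b => (a, b) ∈ D') ≠ ReflTransGen rE := by
    intro D' hss heq
    obtain ⟨p, hpD₀, hpD'⟩ := Finset.exists_of_ssubset hss
    have hsub' := hss.1
    obtain ⟨a, b⟩ := p
    have hmem := (memD₀ a b).1 hpD₀
    have hrab : ReflTransGen (fun a b => (a, b) ∈ D') a b := by
      rw [heq]; exact ReflTransGen.single hmem.1
    rcases hrab.cases_head with rfl | ⟨c, hac, hcb⟩
    · exact hdag a (TransGen.single hmem.1)
    · have hacE : (a, c) ∈ E := hsub (hsub' hac)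
      rcases eq_or_ne c b with rfl | hne
      · exact hpD' hac
      · have hcbE : ReflTransGen rE c b := by
          rw [← heq]
          exact ReflTransGen.mono (fun u v huv => huv) _ _ hcb
        rcases reflTransGen_iff_eq_or_transGen.1 hcbE with rfl | hcb'
        · exact hne rfl
        · exact hmem.2 ⟨c, TransGen.single hacE, hcb'⟩
  refine ⟨D₀, ⟨hsub, hclos, hmin⟩, ?_⟩
  -- uniqueness
  rintro D ⟨hDsub, hDclos, hDmin⟩
  have hD₀D : D₀ ⊆ D := by
    intro p hp
    obtain ⟨a, b⟩ := p
    have hmem := (memD₀ a b).1 hp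
    have hrab : ReflTransGen (fun a b => (a, b) ∈ D) a b := by
      rw [hDclos]; exact ReflTransGen.single hmem.1
    rcases hrab.cases_head with rfl | ⟨c, hac, hcb⟩
    · exact absurd (TransGen.single hmem.1) (hdag a)
    · rcases eq_or_ne c b with rfl | hne
      · exact hac
      · exfalso
        have hcbE : ReflTransGen rE c b := by
          rw [← hDclos]
          exact hcb
        rcases reflTransGen_iff_eq_or_transGen.1 hcbE with rfl | hcb'
        · exact hne rfl
        · exact hmem.2 ⟨c, TransGen.single (hDsub hac), hcb'⟩
  rcases eq_or_ne D D₀ with h | h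
  · exact h
  · exact absurd hclos (hDmin D₀ (lt_of_le_of_ne hD₀D (Ne.symm h)))
end

section
/- If a DAG G equals its own transitive closure (i.e., its edge relation is transitive), then the equivalence class of G under 'equal transitive closure' has cardinality 2^(l−r) where l and r are the edge counts of G's transitive closure and reduction, and G is the unique maximal element (by edge-set inclusion) of its class. -/
/-- if a finite DAG `G = (V, E)` is transitively closed (so `E`
equals its own transitive closure), with transitive reduction `Ered`, `l` edges
in the transitive closure and `r` edges in the transitive reduction, then the
equivalence class of `G` under "equal transitive closure" has cardinality
`2^(l-r)`, and `G` is the unique maximal element of its class under edge-set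
inclusion: every member of the class is contained in `G`, and any member
containing all members of the class equals `G`. -/
theorem transitively_closed_dag_class {V : Type*} [Fintype V] [DecidableEq V]
    (E Ered : Finset (V × V)) (l r : ℕ)
    (hdag : ∀ v, ¬ Relation.TransGen (fun a b => (a, b) ∈ E) v v)
    (htrans : ∀ a b c : V, (a, b) ∈ E → (b, c) ∈ E → (a, c) ∈ E)
    (hsub : Ered ⊆ E)
    (hreach : Relation.ReflTransGen (fun a b => (a, b) ∈ Ered) =
      Relation.ReflTransGen (fun a b => (a, b) ∈ E))
    (hmin : ∀ D ⊆ Ered, Relation.ReflTransGen (fun a b => (a, b) ∈ D) =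
      Relation.ReflTransGen (fun a b => (a, b) ∈ E) → D = Ered)
    (hl : l = Set.ncard {p : V × V | Relation.TransGen (fun a b => (a, b) ∈ E) p.1 p.2})
    (hr : r = Ered.card) :
    Nat.card {H : Finset (V × V) //
        (∀ v, ¬ Relation.TransGen (fun a b => (a, b) ∈ H) v v) ∧
        Relation.TransGen (fun a b => (a, b) ∈ H) =
          Relation.TransGen (fun a b => (a, b) ∈ E)} = 2 ^ (l - r) ∧
    (∀ H : Finset (V × V),
      (∀ v, ¬ Relation.TransGen (fun a b => (a, b) ∈ H) v v) →
      Relation.TransGen (fun a b => (a, b) ∈ H) =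
        Relation.TransGen (fun a b => (a, b) ∈ E) → H ⊆ E) ∧
    ∀ H : Finset (V × V),
      (∀ v, ¬ Relation.TransGen (fun a b => (a, b) ∈ H) v v) →
      Relation.TransGen (fun a b => (a, b) ∈ H) =
        Relation.TransGen (fun a b => (a, b) ∈ E) →
      (∀ H' : Finset (V × V),
        (∀ v, ¬ Relation.TransGen (fun a b => (a, b) ∈ H') v v) →
        Relation.TransGen (fun a b => (a, b) ∈ H') =
          Relation.TransGen (fun a b => (a, b) ∈ E) → H' ⊆ H) → H = E := by
  classical
  -- TransGen of E is E itself
  have hE_iff : ∀ x y : V, Relation.TransGen (fun a b => (a, b) ∈ E) x y ↔ (x, y) ∈ E := by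
    intro x y
    constructor
    · intro h
      induction h with
      | single h => exact h
      | tail _ h ih => exact htrans _ _ _ ih h
    · exact fun h => Relation.TransGen.single h
  have hne : ∀ x y : V, (x, y) ∈ E → x ≠ y := by
    rintro x y h rfl
    exact hdag x (Relation.TransGen.single h)
  -- every class member is ⊆ E
  have hsubE : ∀ H : Finset (V × V),
      Relation.TransGen (fun a b => (a, b) ∈ H) =
        Relation.TransGen (fun a b => (a, b) ∈ E) → H ⊆ E := by
    intro H hH p hp
    have h1 : Relation.TransGen (fun a b => (a, b) ∈ H) p.1 p.2 :=
      Relation.TransGen.single (by simpa using hp)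
    rw [hH] at h1
    simpa using (hE_iff _ _).1 h1
  -- every class member contains Ered
  have hEredsub : ∀ H : Finset (V × V),
      Relation.TransGen (fun a b => (a, b) ∈ H) =
        Relation.TransGen (fun a b => (a, b) ∈ E) → Ered ⊆ H := by
    intro H hH p hp
    obtain ⟨a, b⟩ := p
    by_contra hab
    have hHE : H ⊆ E := hsubE H hH
    -- path from a to b in H
    have hTab : Relation.TransGen (fun x y => (x, y) ∈ H) a b := by
      rw [hH]; exact Relation.TransGen.single (hsub hp)
    -- decompose the last edge
    obtain ⟨c, hac', hcb'⟩ : ∃ c, Relation.TransGen (fun x y => (x, y) ∈ H) a c ∧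
        (c, b) ∈ H := by
      cases hTab with
      | single h => exact absurd h hab
      | tail h1 h2 => exact ⟨_, h1, h2⟩
    have hEac : Relation.TransGen (fun x y => (x, y) ∈ E) a c := by
      rw [hH] at hac'; exact hac'
    have hEcb : Relation.TransGen (fun x y => (x, y) ∈ E) c b :=
      Relation.TransGen.single (hHE hcb')
    set D : Finset (V × V) := Ered.erase (a, b) with hD
    have hDsub : D ⊆ Ered := Finset.erase_subset _ _
    -- claim A : Ered-paths x → y with y strictly reaching b avoid (a,b)
    have claimA : ∀ x y : V, Relation.ReflTransGen (fun u v => (u, v) ∈ Ered) x y →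
        Relation.TransGen (fun u v => (u, v) ∈ E) y b →
        Relation.ReflTransGen (fun u v => (u, v) ∈ D) x y := by
      intro x y hxy
      induction hxy using Relation.ReflTransGen.head_induction_on with
      | refl => intro _; exact Relation.ReflTransGen.refl
      | head hz hzy ih =>
        rename_i u z
        intro hyb
        by_cases huz : (u, z) = (a, b)
        · exfalso
          have hzb : z = b := congrArg Prod.snd huz
          have hby : Relation.ReflTransGen (fun p q => (p, q) ∈ E) b y := by
            rw [← hreach, ← hzb]; exact hzy
          exact hdag b (Relation.TransGen.trans_right hby hyb)
        · exact Relation.ReflTransGen.head (Finset.mem_erase.mpr ⟨huz, hz⟩) (ih hyb)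
    -- claim B : Ered-paths x → y with a strictly reaching x avoid (a,b)
    have claimB : ∀ x y : V, Relation.ReflTransGen (fun u v => (u, v) ∈ Ered) x y →
        Relation.TransGen (fun u v => (u, v) ∈ E) a x →
        Relation.ReflTransGen (fun u v => (u, v) ∈ D) x y := by
      intro x y hxy
      induction hxy using Relation.ReflTransGen.head_induction_on with
      | refl => intro _; exact Relation.ReflTransGen.refl
      | head hz hzy ih =>
        rename_i u z
        intro hax
        by_cases huz : (u, z) = (a, b)
        · exfalso
          have hu : u = a := congrArg Prod.fst huz
          exact hdag a (hu ▸ hax)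
        · exact Relation.ReflTransGen.head (Finset.mem_erase.mpr ⟨huz, hz⟩)
            (ih (hax.tail (hsub hz)))
    have hDab : Relation.ReflTransGen (fun u v => (u, v) ∈ D) a b := by
      have h1 : Relation.ReflTransGen (fun u v => (u, v) ∈ Ered) a c := by
        rw [hreach]; exact hEac.to_reflTransGen
      have h2 : Relation.ReflTransGen (fun u v => (u, v) ∈ Ered) c b := by
        rw [hreach]; exact hEcb.to_reflTransGen
      exact (claimA a c h1 hEcb).trans (claimB c b h2 hEac)
    have hErD : ∀ x y : V, Relation.ReflTransGen (fun u v => (u, v) ∈ Ered) x y →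
        Relation.ReflTransGen (fun u v => (u, v) ∈ D) x y := by
      intro x y hxy
      induction hxy using Relation.ReflTransGen.head_induction_on with
      | refl => exact Relation.ReflTransGen.refl
      | head hz hzy ih =>
        rename_i u z
        by_cases huz : (u, z) = (a, b)
        · have h1 : u = a := congrArg Prod.fst huz
          have h2 : z = b := congrArg Prod.snd huz
          rw [h1]
          rw [h2] at ih
          exact hDab.trans ih
        · exact Relation.ReflTransGen.head (Finset.mem_erase.mpr ⟨huz, hz⟩) ih
    have hDr : Relation.ReflTransGen (fun u v => (u, v) ∈ D) =
        Relation.ReflTransGen (fun u v => (u, v) ∈ E) := by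
      funext x y
      apply propext
      constructor
      · intro h
        exact Relation.ReflTransGen.mono (fun p q hpq => hsub (hDsub hpq)) _ _ h
      · intro h
        rw [← hreach] at h
        exact hErD x y h
    have : D = Ered := hmin D hDsub hDr
    have : (a, b) ∈ D := this.symm ▸ hp
    exact (Finset.notMem_erase _ _) this
  -- converse : anything between Ered and E is in the class
  have hclass : ∀ H : Finset (V × V), Ered ⊆ H → H ⊆ E →
      (∀ v, ¬ Relation.TransGen (fun a b => (a, b) ∈ H) v v) ∧
      Relation.TransGen (fun a b => (a, b) ∈ H) =
        Relation.TransGen (fun a b => (a, b) ∈ E) := by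
    intro H h1 h2
    have hmono : ∀ x y : V, Relation.TransGen (fun a b => (a, b) ∈ H) x y →
        Relation.TransGen (fun a b => (a, b) ∈ E) x y :=
      fun x y h => Relation.TransGen.mono (fun p q hpq => h2 hpq) _ _ h
    constructor
    · intro v hv
      exact hdag v (hmono v v hv)
    · funext x y
      apply propext
      constructor
      · exact hmono x y
      · intro h
        have hxy : (x, y) ∈ E := (hE_iff x y).1 h
        have hxney : x ≠ y := hne x y hxy
        have hpath : Relation.ReflTransGen (fun a b => (a, b) ∈ H) x y := by
          have : Relation.ReflTransGen (fun a b => (a, b) ∈ Ered) x y := by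
            rw [hreach]; exact Relation.ReflTransGen.single hxy
          exact Relation.ReflTransGen.mono (fun p q hpq => h1 hpq) _ _ this
        rcases Relation.reflTransGen_iff_eq_or_transGen.mp hpath with h' | h'
        · exact absurd h'.symm hxney
        · exact h'
  refine ⟨?_, fun H _ hH => hsubE H hH, ?_⟩
  · -- cardinality
    have hcond : ∀ H : Finset (V × V),
        ((∀ v, ¬ Relation.TransGen (fun a b => (a, b) ∈ H) v v) ∧
          Relation.TransGen (fun a b => (a, b) ∈ H) =
            Relation.TransGen (fun a b => (a, b) ∈ E)) ↔ H ∈ Finset.Icc Ered E := by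
      intro H
      rw [Finset.mem_Icc]
      constructor
      · rintro ⟨_, hH⟩
        exact ⟨hEredsub H hH, hsubE H hH⟩
      · rintro ⟨h1, h2⟩
        exact hclass H h1 h2
    have hcard : Nat.card {H : Finset (V × V) //
        (∀ v, ¬ Relation.TransGen (fun a b => (a, b) ∈ H) v v) ∧
        Relation.TransGen (fun a b => (a, b) ∈ H) =
          Relation.TransGen (fun a b => (a, b) ∈ E)} =
        Nat.card {H : Finset (V × V) // H ∈ Finset.Icc Ered E} :=
      Nat.card_congr (Equiv.subtypeEquivRight hcond)
    rw [hcard]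
    have : Nat.card {H : Finset (V × V) // H ∈ Finset.Icc Ered E} =
        (Finset.Icc Ered E).card := by
      rw [Nat.card_eq_fintype_card, Fintype.card_coe]
    rw [this, Finset.card_Icc_finset hsub]
    have hlE : l = E.card := by
      rw [hl]
      have : {p : V × V | Relation.TransGen (fun a b => (a, b) ∈ E) p.1 p.2} =
          (E : Set (V × V)) := by
        ext p
        simp [hE_iff p.1 p.2]
      rw [this, Set.ncard_coe_finset]
    rw [hlE, hr]
  · -- uniqueness of maximal element
    intro H _ hH hmax
    apply Finset.Subset.antisymm (hsubE H hH)
    exact hmax E hdag rfl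
end
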